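/- arXiv:2306.15206 — 4 statements merged into one kernel-verified Lean document; each statement's English description precedes it below -/
import Mathlib

section
/- Let G ∈ {C5, bull, gem, co-gem} and let (A,B) be a vertex partition of G with |A| < |B|, and let H = G ⊕ P for some subset P of {(A,A),(B,B)} (the graph obtained by flipping each pair in P). If H has at least two isolated vertices, then G is the co-gem, and either A consists of the isolated vertex and one of the degree-1 vertices with P = {(B,B)}, or A consists of one of the degree-1 vertices and its neighbor with P = {(A,A)}. Moreover, in these cases H has exactly two isolated vertices. -/
open SimpleGraph Set

namespace FlipWidth

variable {V : Type*}

/-- The flip of a graph `G` by a pair `(A, B)` of vertex sets. -/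
def flip (G : SimpleGraph V) (A B : Set V) : SimpleGraph V where
  Adj u v := u ≠ v ∧ Xor' ((u ∈ A ∧ v ∈ B) ∨ (u ∈ B ∧ v ∈ A)) (G.Adj u v)
  symm := by
    constructor
    intro u v ⟨h, hx⟩
    refine ⟨h.symm, ?_⟩
    have := G.adj_comm u v
    unfold Xor' Xor at *
    tauto
  loopless := by constructor; intro v h; exact h.1 rfl

/-- Whether a pair of vertex sets "crosses" the (unordered) pair of vertices `u, v`. -/
def crossPair (p : Set V × Set V) (u v : V) : Prop :=
  (u ∈ p.1 ∧ v ∈ p.2) ∨ (u ∈ p.2 ∧ v ∈ p.1)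

/-- The graph obtained from `G` by flipping every pair in `P` (order irrelevant
since flips commute: adjacency is toggled according to the parity of the number
of pairs in `P` crossing the two vertices). -/
def flips (G : SimpleGraph V) (P : Set (Set V × Set V)) : SimpleGraph V where
  Adj u v := u ≠ v ∧ Xor' (Odd {p ∈ P | crossPair p u v}.ncard) (G.Adj u v)
  symm := by
    constructor
    intro u v ⟨h, hx⟩
    refine ⟨h.symm, ?_⟩
    have hset : {p ∈ P | crossPair p v u} = {p ∈ P | crossPair p u v} := by
      ext p; unfold crossPair; constructor <;> (intro ⟨h1, h2⟩; exact ⟨h1, by tauto⟩)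
    rw [hset]
    have := G.adj_comm u v
    unfold Xor' Xor at *
    tauto
  loopless := by constructor; intro v h; exact h.1 rfl

/-- `A` is complete to `B` in `G`. -/
def Complete (G : SimpleGraph V) (A B : Set V) : Prop :=
  ∀ a ∈ A, ∀ b ∈ B, G.Adj a b

/-- `A` is anti-complete to `B` in `G`. -/
def Anticomplete (G : SimpleGraph V) (A B : Set V) : Prop :=
  ∀ a ∈ A, ∀ b ∈ B, ¬ G.Adj a b

/-- `(V1, V2)` is a bi-join in `G`. -/
def IsBiJoin (G : SimpleGraph V) (V1 V2 : Set V) : Prop :=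
  ∃ W1 W2 : Set V, W1 ⊆ V1 ∧ W2 ⊆ V2 ∧
    Complete G W1 W2 ∧ Anticomplete G W1 (V2 \ W2) ∧
    Complete G (V1 \ W1) (V2 \ W2) ∧ Anticomplete G (V1 \ W1) W2

/-- `(W1, V1\W1, W2, V2\W2)` is a bi-join partition of `(V1, V2)`. -/
def IsBiJoinPartition (G : SimpleGraph V) (V1 V2 W1 W2 : Set V) : Prop :=
  W1 ⊆ V1 ∧ W2 ⊆ V2 ∧
    Complete G W1 W2 ∧ Anticomplete G W1 (V2 \ W2) ∧
    Complete G (V1 \ W1) (V2 \ W2) ∧ Anticomplete G (V1 \ W1) W2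

/-- Degree of a vertex, as the cardinality of its neighborhood. -/
noncomputable def ndeg (G : SimpleGraph V) (v : V) : ℕ := (G.neighborSet v).ncard

/-- `u` and `v` lie in two distinct sets among `A`, `B`, `C`. -/
def crossParts (A B C : Set V) (u v : V) : Prop :=
  (u ∈ A ∧ v ∈ B) ∨ (u ∈ B ∧ v ∈ A) ∨ (u ∈ A ∧ v ∈ C) ∨ (u ∈ C ∧ v ∈ A) ∨
    (u ∈ B ∧ v ∈ C) ∨ (u ∈ C ∧ v ∈ B)

/-- The cycle on 5 vertices. -/
def C5 : SimpleGraph (Fin 5) := SimpleGraph.fromRel (fun u v => v = u + 1)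

/-- The bull: a triangle `0,1,2` with pendant vertices `3` (at `0`) and `4` (at `1`). -/
def bull : SimpleGraph (Fin 5) :=
  SimpleGraph.fromRel (fun u v =>
    (u, v) ∈ ([(0,1),(1,2),(0,2),(0,3),(1,4)] : List (Fin 5 × Fin 5)))

/-- The gem: the path `0-1-2-3` plus a dominating vertex `4`. -/
def gem : SimpleGraph (Fin 5) :=
  SimpleGraph.fromRel (fun u v =>
    (u, v) ∈ ([(0,1),(1,2),(2,3),(4,0),(4,1),(4,2),(4,3)] : List (Fin 5 × Fin 5)))

/-- The co-gem: the path `0-1-2-3` plus an isolated vertex `4`. -/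
def cogem : SimpleGraph (Fin 5) :=
  SimpleGraph.fromRel (fun u v =>
    (u, v) ∈ ([(0,1),(1,2),(2,3)] : List (Fin 5 × Fin 5)))

/-- The four obstruction graphs. -/
def Fobs : Set (SimpleGraph (Fin 5)) := {C5, bull, gem, cogem}


end FlipWidth

open FlipWidth

section Aux

/-! ### Boolean models of the four obstruction graphs -/

def fC5 (u v : Fin 5) : Bool := decide (u ≠ v ∧ (v = u + 1 ∨ u = v + 1))
def fbull (u v : Fin 5) : Bool := decide (u ≠ v ∧
  ((u, v) ∈ ([(0,1),(1,2),(0,2),(0,3),(1,4)] : List (Fin 5 × Fin 5)) ∨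
   (v, u) ∈ ([(0,1),(1,2),(0,2),(0,3),(1,4)] : List (Fin 5 × Fin 5))))
def fgem (u v : Fin 5) : Bool := decide (u ≠ v ∧
  ((u, v) ∈ ([(0,1),(1,2),(2,3),(4,0),(4,1),(4,2),(4,3)] : List (Fin 5 × Fin 5)) ∨
   (v, u) ∈ ([(0,1),(1,2),(2,3),(4,0),(4,1),(4,2),(4,3)] : List (Fin 5 × Fin 5))))
def fcogem (u v : Fin 5) : Bool := decide (u ≠ v ∧
  ((u, v) ∈ ([(0,1),(1,2),(2,3)] : List (Fin 5 × Fin 5)) ∨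
   (v, u) ∈ ([(0,1),(1,2),(2,3)] : List (Fin 5 × Fin 5))))

lemma c5_adj (u v : Fin 5) : C5.Adj u v ↔ fC5 u v = true := by
  rw [C5, SimpleGraph.fromRel_adj]; exact decide_eq_true_iff.symm
lemma bull_adj (u v : Fin 5) : bull.Adj u v ↔ fbull u v = true := by
  rw [bull, SimpleGraph.fromRel_adj]; exact decide_eq_true_iff.symm
lemma gem_adj (u v : Fin 5) : gem.Adj u v ↔ fgem u v = true := by
  rw [gem, SimpleGraph.fromRel_adj]; exact decide_eq_true_iff.symm
lemma cogem_adj (u v : Fin 5) : cogem.Adj u v ↔ fcogem u v = true := by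
  rw [cogem, SimpleGraph.fromRel_adj]; exact decide_eq_true_iff.symm

/-! ### Boolean model of the flipped graph -/

def adjH (g : Fin 5 → Fin 5 → Bool) (a : Fin 5 → Bool) (pA pB : Bool) (u v : Fin 5) : Bool :=
  (u != v) && (Bool.xor ((pA && a u && a v) || (pB && !(a u) && !(a v))) (g u v))

def cntA (a : Fin 5 → Bool) : ℕ := (Finset.univ.filter (fun v => a v = true)).card
def degB (g : Fin 5 → Fin 5 → Bool) (w : Fin 5) : ℕ :=
  (Finset.univ.filter (fun v => g w v = true)).card
def isoB (g : Fin 5 → Fin 5 → Bool) (a : Fin 5 → Bool) (pA pB : Bool) (v : Fin 5) : Bool :=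
  decide (∀ u, adjH g a pA pB v u = false)
def isoCnt (g : Fin 5 → Fin 5 → Bool) (a : Fin 5 → Bool) (pA pB : Bool) : ℕ :=
  (Finset.univ.filter (fun v => isoB g a pA pB v = true)).card

/-! ### The decidable core statement -/

def KeyProp (g : Fin 5 → Fin 5 → Bool) : Prop :=
  ∀ a : Fin 5 → Bool, ∀ pA pB : Bool,
    cntA a < cntA (fun v => !(a v)) → 2 ≤ isoCnt g a pA pB →
    g = fcogem ∧
      ((∃ w x : Fin 5, degB g w = 0 ∧ degB g x = 1 ∧
          (∀ v, a v = decide (v = w ∨ v = x)) ∧ pA = false ∧ pB = true) ∨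
       (∃ x y : Fin 5, degB g x = 1 ∧ g x y = true ∧
          (∀ v, a v = decide (v = x ∨ v = y)) ∧ pA = true ∧ pB = false)) ∧
      isoCnt g a pA pB = 2

instance (g : Fin 5 → Fin 5 → Bool) : Decidable (KeyProp g) := by
  unfold KeyProp; infer_instance

lemma keyC5 : KeyProp fC5 := by decide
lemma keyBull : KeyProp fbull := by decide
lemma keyGem : KeyProp fgem := by decide
lemma keyCogem : KeyProp fcogem := by decide

/-! ### Bridging lemmas -/

lemma crossSet (A : Set (Fin 5)) (P : Set (Set (Fin 5) × Set (Fin 5)))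
    (hP : P ⊆ {(A, A), (Aᶜ, Aᶜ)}) (u v : Fin 5) :
    Odd {p ∈ P | crossPair p u v}.ncard ↔
      (((A, A) ∈ P ∧ u ∈ A ∧ v ∈ A) ∨ ((Aᶜ, Aᶜ) ∈ P ∧ u ∉ A ∧ v ∉ A)) := by
  constructor
  · intro hodd
    have hne : {p ∈ P | crossPair p u v}.Nonempty := by
      rcases Set.eq_empty_or_nonempty {p ∈ P | crossPair p u v} with h | h
      · rw [h] at hodd; simp at hodd
      · exact h
    obtain ⟨p, hpP, hpc⟩ := hne
    rcases hP hpP with h | h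
    · subst h; left
      exact ⟨hpP, by rcases hpc with ⟨h1, h2⟩ | ⟨h1, h2⟩ <;> exact ⟨h1, h2⟩⟩
    · rw [Set.mem_singleton_iff] at h; subst h; right
      exact ⟨hpP, by rcases hpc with ⟨h1, h2⟩ | ⟨h1, h2⟩ <;> exact ⟨h1, h2⟩⟩
  · rintro (⟨hmem, hu, hv⟩ | ⟨hmem, hu, hv⟩)
    · have hs : {p ∈ P | crossPair p u v} = {(A, A)} := by
        ext p
        simp only [Set.mem_setOf_eq, Set.mem_singleton_iff]
        constructor
        · rintro ⟨hpP, hpc⟩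
          rcases hP hpP with h | h
          · exact h
          · rw [Set.mem_singleton_iff] at h; subst h
            exfalso; rcases hpc with ⟨h1, _⟩ | ⟨h1, _⟩ <;> exact h1 hu
        · rintro rfl; exact ⟨hmem, Or.inl ⟨hu, hv⟩⟩
      rw [hs, Set.ncard_singleton]; exact odd_one
    · have hs : {p ∈ P | crossPair p u v} = {(Aᶜ, Aᶜ)} := by
        ext p
        simp only [Set.mem_setOf_eq, Set.mem_singleton_iff]
        constructor
        · rintro ⟨hpP, hpc⟩
          rcases hP hpP with h | h
          · subst h
            exfalso; rcases hpc with ⟨h1, _⟩ | ⟨h1, _⟩ <;> exact hu h1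
          · exact h
        · rintro rfl; exact ⟨hmem, Or.inl ⟨hu, hv⟩⟩
      rw [hs, Set.ncard_singleton]; exact odd_one

lemma flips_adj_iff (G : SimpleGraph (Fin 5)) (A : Set (Fin 5))
    (P : Set (Set (Fin 5) × Set (Fin 5))) (hP : P ⊆ {(A, A), (Aᶜ, Aᶜ)})
    (g : Fin 5 → Fin 5 → Bool) (a : Fin 5 → Bool) (pA pB : Bool)
    (hg : ∀ u v, G.Adj u v ↔ g u v = true) (ha : ∀ v, v ∈ A ↔ a v = true)
    (hpA : (A, A) ∈ P ↔ pA = true) (hpB : (Aᶜ, Aᶜ) ∈ P ↔ pB = true)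
    (u v : Fin 5) :
    (flips G P).Adj u v ↔ adjH g a pA pB u v = true := by
  show (u ≠ v ∧ Xor' (Odd {p ∈ P | crossPair p u v}.ncard) (G.Adj u v)) ↔ _
  rw [crossSet A P hP u v]
  have h1 : u ≠ v ↔ (u != v) = true := by simp
  rw [h1, hg u v]
  simp only [hpA, hpB, ha, adjH]
  cases u != v <;> cases pA <;> cases pB <;> cases a u <;> cases a v <;> cases g u v <;>
    simp [Xor']

/-! ### Main auxiliary lemma -/

lemma mainAux (G : SimpleGraph (Fin 5)) (g : Fin 5 → Fin 5 → Bool)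
    (hkey : KeyProp g) (hadj : ∀ u v, G.Adj u v ↔ g u v = true)
    (A : Set (Fin 5)) (P : Set (Set (Fin 5) × Set (Fin 5)))
    (hP : P ⊆ {(A, A), (Aᶜ, Aᶜ)}) (hcard : A.ncard < Aᶜ.ncard)
    (hiso : 2 ≤ {v | (flips G P).neighborSet v = ∅}.ncard) :
    G = cogem ∧
      ((∃ w x : Fin 5, ndeg G w = 0 ∧ ndeg G x = 1 ∧ A = {w, x} ∧
          P = {(Aᶜ, Aᶜ)}) ∨
        (∃ x y : Fin 5, ndeg G x = 1 ∧ G.Adj x y ∧ A = {x, y} ∧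
          P = {(A, A)})) ∧
      {v | (flips G P).neighborSet v = ∅}.ncard = 2 := by
  classical
  set a : Fin 5 → Bool := fun v => decide (v ∈ A) with ha_def
  have ha : ∀ v, v ∈ A ↔ a v = true := fun v => decide_eq_true_iff.symm
  set pA : Bool := decide ((A, A) ∈ P) with hpA_def
  set pB : Bool := decide ((Aᶜ, Aᶜ) ∈ P) with hpB_def
  have hpA : (A, A) ∈ P ↔ pA = true := decide_eq_true_iff.symm
  have hpB : (Aᶜ, Aᶜ) ∈ P ↔ pB = true := decide_eq_true_iff.symm
  have hAcnt : A.ncard = cntA a := by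
    have hA : A = ↑(Finset.univ.filter (fun v => a v = true)) := by
      ext v; simp [ha v]
    rw [hA, Set.ncard_coe_finset]; rfl
  have hBcnt : Aᶜ.ncard = cntA (fun v => !(a v)) := by
    have hA : Aᶜ = ↑(Finset.univ.filter (fun v => (!(a v)) = true)) := by
      ext v; simp [ha v]
    rw [hA, Set.ncard_coe_finset]; rfl
  have hflip : ∀ u v, (flips G P).Adj u v ↔ adjH g a pA pB u v = true :=
    flips_adj_iff G A P hP g a pA pB hadj ha hpA hpB
  have hisoset : {v | (flips G P).neighborSet v = ∅} =
      ↑(Finset.univ.filter (fun v => isoB g a pA pB v = true)) := by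
    ext v
    simp only [Set.mem_setOf_eq, Set.eq_empty_iff_forall_notMem,
      SimpleGraph.mem_neighborSet, Finset.coe_filter, Finset.mem_univ, true_and,
      isoB, decide_eq_true_iff]
    constructor
    · intro h u
      have := h u
      rw [hflip v u] at this
      simpa using this
    · intro h u hu
      rw [hflip v u] at hu
      rw [h u] at hu
      exact Bool.false_ne_true hu
  have hisocard : {v | (flips G P).neighborSet v = ∅}.ncard = isoCnt g a pA pB := by
    rw [hisoset, Set.ncard_coe_finset]; rfl
  obtain ⟨hgco, hmain, hcnt2⟩ :=
    hkey a pA pB (by rw [← hAcnt, ← hBcnt]; exact hcard) (by rw [← hisocard]; exact hiso)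
  have hndeg : ∀ w, ndeg G w = degB g w := by
    intro w
    have hns : G.neighborSet w = ↑(Finset.univ.filter (fun v => g w v = true)) := by
      ext v; simp [SimpleGraph.mem_neighborSet, hadj w v]
    rw [ndeg, hns, Set.ncard_coe_finset]; rfl
  refine ⟨?_, ?_, by rw [hisocard, hcnt2]⟩
  · ext u v
    rw [hadj u v, hgco, ← cogem_adj]
  · rcases hmain with ⟨w, x, hdw, hdx, haeq, hpAf, hpBt⟩ | ⟨x, y, hdx, hxy, haeq, hpAt, hpBf⟩
    · left
      refine ⟨w, x, by rw [hndeg w, hdw], by rw [hndeg x, hdx], ?_, ?_⟩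
      · ext v
        rw [ha v, haeq v]
        simp [Set.mem_insert_iff]
      · ext p
        simp only [Set.mem_singleton_iff]
        constructor
        · intro hp
          rcases hP hp with h | h
          · exfalso
            have := hpA.mp (h ▸ hp)
            rw [hpAf] at this
            exact Bool.false_ne_true this
          · exact h
        · rintro rfl
          exact hpB.mpr hpBt
    · right
      refine ⟨x, y, by rw [hndeg x, hdx], (hadj x y).mpr hxy, ?_, ?_⟩
      · ext v
        rw [ha v, haeq v]
        simp [Set.mem_insert_iff]
      · ext p
        simp only [Set.mem_singleton_iff]
        constructor
        · intro hp
          rcases hP hp with h | h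
          · exact h
          · exfalso
            rw [Set.mem_singleton_iff] at h
            have := hpB.mp (h ▸ hp)
            rw [hpBf] at this
            exact Bool.false_ne_true this
        · rintro rfl
          exact hpA.mpr hpAt

end Aux

open FlipWidth in
/-- If `G ∈ {C5, bull, gem, cogem}`, `(A,B)` is a vertex partition of `G` with
`|A| < |B|`, `P ⊆ {(A,A),(B,B)}` and `H = G ⊕ P` has at least two isolated
vertices, then `G` is the co-gem and either `A` consists of the isolated vertex
and a degree-1 vertex with `P = {(B,B)}`, or `A` consists of a degree-1 vertex
and its neighbor with `P = {(A,A)}`; moreover `H` has exactly two isolated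
vertices. -/
theorem two_isolated_no_cross_flip :
    ∀ G ∈ Fobs, ∀ A B : Set (Fin 5), Disjoint A B → A ∪ B = Set.univ →
      A.ncard < B.ncard →
      ∀ P : Set (Set (Fin 5) × Set (Fin 5)), P ⊆ {(A, A), (B, B)} →
      2 ≤ {v | (flips G P).neighborSet v = ∅}.ncard →
      G = cogem ∧
        ((∃ w x : Fin 5, ndeg G w = 0 ∧ ndeg G x = 1 ∧ A = {w, x} ∧
            P = {(B, B)}) ∨
          (∃ x y : Fin 5, ndeg G x = 1 ∧ G.Adj x y ∧ A = {x, y} ∧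
            P = {(A, A)})) ∧
        {v | (flips G P).neighborSet v = ∅}.ncard = 2 := by
  intro G hG A B hdisj huniv hcard P hP hiso
  classical
  have hB : B = Aᶜ := by
    ext v
    simp only [Set.mem_compl_iff]
    constructor
    · intro hv hA
      exact Set.disjoint_left.mp hdisj hA hv
    · intro hv
      have : v ∈ A ∪ B := huniv ▸ Set.mem_univ v
      rcases this with h | h
      · exact absurd h hv
      · exact h
  subst hB
  simp only [Fobs, Set.mem_insert_iff, Set.mem_singleton_iff] at hG
  rcases hG with rfl | rfl | rfl | rfl
  · exact mainAux C5 fC5 keyC5 c5_adj A P hP hcard hiso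
  · exact mainAux bull fbull keyBull bull_adj A P hP hcard hiso
  · exact mainAux gem fgem keyGem gem_adj A P hP hcard hiso
  · exact mainAux cogem fcogem keyCogem cogem_adj A P hP hcard hiso
end

section
/- Let G ∈ {C5, bull, gem, co-gem} and let (A,B) be a vertex partition of G with |A| < |B|, and let H = G ⊕ P for some P with (A,B) ∈ P ⊆ {(A,A),(B,B),(A,B)}. If H has at least two isolated vertices, then G is the gem, and either A consists of two non-adjacent vertices of degree 2 and 3 with P = {(B,B),(A,B)}, or A consists of the dominating vertex and a vertex of degree 3 with P = {(A,A),(A,B)}. Moreover, in these cases H has exactly two isolated vertices. -/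
open SimpleGraph Set

namespace FlipWidth

variable {V : Type*}

section Aux

instance : DecidableRel C5.Adj :=
  fun u v => inferInstanceAs (Decidable (u ≠ v ∧ (v = u + 1 ∨ u = v + 1)))
instance : DecidableRel bull.Adj :=
  fun u v => inferInstanceAs (Decidable (u ≠ v ∧ (_ ∈ _ ∨ _ ∈ _)))
instance : DecidableRel gem.Adj :=
  fun u v => inferInstanceAs (Decidable (u ≠ v ∧ (_ ∈ _ ∨ _ ∈ _)))
instance : DecidableRel cogem.Adj :=
  fun u v => inferInstanceAs (Decidable (u ≠ v ∧ (_ ∈ _ ∨ _ ∈ _)))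

/-- A decidable model of a cross-flip determined by a finset and two booleans. -/
def flipM (G : SimpleGraph (Fin 5)) (s : Finset (Fin 5)) (b1 b2 : Bool) : SimpleGraph (Fin 5) where
  Adj u v := u ≠ v ∧ Xor' (Xor' (b1 = true ∧ u ∈ s ∧ v ∈ s)
    (Xor' (b2 = true ∧ u ∉ s ∧ v ∉ s) ((u ∈ s ∧ v ∉ s) ∨ (u ∉ s ∧ v ∈ s)))) (G.Adj u v)
  symm := by
    constructor
    intro u v ⟨h, hx⟩
    refine ⟨h.symm, ?_⟩
    rw [show ((b1 = true ∧ v ∈ s ∧ u ∈ s)) = ((b1 = true ∧ u ∈ s ∧ v ∈ s)) from propext (by tauto),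
       show ((b2 = true ∧ v ∉ s ∧ u ∉ s)) = ((b2 = true ∧ u ∉ s ∧ v ∉ s)) from propext (by tauto),
       show (((v ∈ s ∧ u ∉ s) ∨ (v ∉ s ∧ u ∈ s))) = (((u ∈ s ∧ v ∉ s) ∨ (u ∉ s ∧ v ∈ s))) from
         propext (by tauto),
       G.adj_comm v u]
    exact hx
  loopless := by constructor; intro v h; exact h.1 rfl

instance (G : SimpleGraph (Fin 5)) [DecidableRel G.Adj] (s : Finset (Fin 5)) (b1 b2 : Bool) :
    DecidableRel (flipM G s b1 b2).Adj :=
  fun _ _ => inferInstanceAs (Decidable (_ ∧ Xor (Xor (_ ∧ _) (Xor (_ ∧ _) _)) _))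

/-- The number of isolated vertices of `flipM G s b1 b2`, as a computable function. -/
def isoCount (G : SimpleGraph (Fin 5)) [DecidableRel G.Adj] (s : Finset (Fin 5))
    (b1 b2 : Bool) : ℕ :=
  (Finset.univ.filter (fun v => ∀ u, ¬ (flipM G s b1 b2).Adj v u)).card

lemma iso_ncard (G : SimpleGraph (Fin 5)) [DecidableRel G.Adj] (s : Finset (Fin 5))
    (b1 b2 : Bool) :
    {v | (flipM G s b1 b2).neighborSet v = ∅}.ncard = isoCount G s b1 b2 := by
  have h : {v | (flipM G s b1 b2).neighborSet v = ∅} =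
      ↑(Finset.univ.filter (fun v => ∀ u, ¬ (flipM G s b1 b2).Adj v u)) := by
    ext v
    simp [Set.eq_empty_iff_forall_notMem, SimpleGraph.mem_neighborSet, SimpleGraph.IsIsolated]
  rw [h, Set.ncard_coe_finset, isoCount]

lemma key : ∀ s : Finset (Fin 5), 2 * s.card < 5 → ∀ b1 b2 : Bool,
    (¬ 2 ≤ isoCount C5 s b1 b2) ∧ (¬ 2 ≤ isoCount bull s b1 b2) ∧
    (¬ 2 ≤ isoCount cogem s b1 b2) ∧
    (2 ≤ isoCount gem s b1 b2 →
      ((s = {0,2} ∨ s = {1,3}) ∧ b1 = false ∧ b2 = true ∨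
       (s = {1,4} ∨ s = {2,4}) ∧ b1 = true ∧ b2 = false) ∧ isoCount gem s b1 b2 = 2) := by
  decide

lemma odd_sep_triple {α : Type*} {a b c : α} (hab : a ≠ b) (hac : a ≠ c) (hbc : b ≠ c)
    {P : Set α} (hP : P ⊆ {a, b, c}) (Q : α → Prop) :
    Odd {p ∈ P | Q p}.ncard ↔ Xor' (a ∈ P ∧ Q a) (Xor' (b ∈ P ∧ Q b) (c ∈ P ∧ Q c)) := by
  classical
  have h1 : {p ∈ P | Q p} = ↑(({a, b, c} : Finset α).filter (fun p => p ∈ P ∧ Q p)) := by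
    ext p
    simp only [Set.mem_setOf_eq, Finset.coe_filter, Finset.mem_insert, Finset.mem_singleton]
    constructor
    · rintro ⟨hp, hq⟩
      refine ⟨?_, hp, hq⟩
      have := hP hp
      simpa using this
    · tauto
  rw [h1, Set.ncard_coe_finset, Finset.card_filter,
    Finset.sum_insert (by simp [hab, hac]), Finset.sum_insert (by simp [hbc]),
    Finset.sum_singleton]
  by_cases h₁ : a ∈ P ∧ Q a <;> by_cases h₂ : b ∈ P ∧ Q b <;> by_cases h₃ : c ∈ P ∧ Q c <;>
    simp [h₁, h₂, h₃, Xor', Nat.odd_iff]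

lemma flips_adj_iff (G : SimpleGraph V) {A B : Set V} (hAB : A ≠ B)
    {P : Set (Set V × Set V)} (hsub : P ⊆ {(A, A), (B, B), (A, B)}) (u v : V) :
    (flips G P).Adj u v ↔ u ≠ v ∧
      Xor' (Xor' ((A, A) ∈ P ∧ (u ∈ A ∧ v ∈ A))
        (Xor' ((B, B) ∈ P ∧ (u ∈ B ∧ v ∈ B))
          ((A, B) ∈ P ∧ ((u ∈ A ∧ v ∈ B) ∨ (u ∈ B ∧ v ∈ A))))) (G.Adj u v) := by
  have hab : ((A, A) : Set V × Set V) ≠ (B, B) := fun h => hAB (congrArg Prod.fst h)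
  have hac : ((A, A) : Set V × Set V) ≠ (A, B) := fun h => hAB (congrArg Prod.snd h)
  have hbc : ((B, B) : Set V × Set V) ≠ (A, B) := fun h => hAB.symm (congrArg Prod.fst h)
  have hodd := odd_sep_triple hab hac hbc hsub (fun p => crossPair p u v)
  show u ≠ v ∧ Xor' (Odd {p ∈ P | crossPair p u v}.ncard) (G.Adj u v) ↔ _
  have e1 : crossPair ((A, A) : Set V × Set V) u v ↔ (u ∈ A ∧ v ∈ A) := by
    unfold crossPair; exact or_self_iff
  have e2 : crossPair ((B, B) : Set V × Set V) u v ↔ (u ∈ B ∧ v ∈ B) := by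
    unfold crossPair; exact or_self_iff
  have e3 : crossPair ((A, B) : Set V × Set V) u v ↔ ((u ∈ A ∧ v ∈ B) ∨ (u ∈ B ∧ v ∈ A)) :=
    Iff.rfl
  rw [hodd]
  simp only [e1, e2, e3]

lemma ndeg_eq_degree (G : SimpleGraph (Fin 5)) [DecidableRel G.Adj] (v : Fin 5) :
    ndeg G v = G.degree v := by
  rw [ndeg, ← SimpleGraph.card_neighborSet_eq_degree, Set.ncard_eq_toFinset_card',
    Set.toFinset_card]

end Aux

end FlipWidth
open FlipWidth in
/-- If `G ∈ {C5, bull, gem, cogem}`, `(A,B)` is a vertex partition of `G` with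
`|A| < |B|`, `(A,B) ∈ P ⊆ {(A,A),(B,B),(A,B)}` and `H = G ⊕ P` has at least two
isolated vertices, then `G` is the gem and either `A` consists of two
non-adjacent vertices of degree `2` and `3` with `P = {(B,B),(A,B)}`, or `A`
consists of the dominating vertex and a vertex of degree `3` with
`P = {(A,A),(A,B)}`; moreover `H` has exactly two isolated vertices. -/
theorem two_isolated_cross_flip :
    ∀ G ∈ Fobs, ∀ A B : Set (Fin 5), Disjoint A B → A ∪ B = Set.univ →
      A.ncard < B.ncard →
      ∀ P : Set (Set (Fin 5) × Set (Fin 5)),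
        (A, B) ∈ P → P ⊆ {(A, A), (B, B), (A, B)} →
      2 ≤ {v | (flips G P).neighborSet v = ∅}.ncard →
      G = gem ∧
        ((∃ x y : Fin 5, ndeg G x = 2 ∧ ndeg G y = 3 ∧ ¬ G.Adj x y ∧ x ≠ y ∧
            A = {x, y} ∧ P = {(B, B), (A, B)}) ∨
          (∃ x y : Fin 5, (∀ w : Fin 5, w ≠ x → G.Adj x w) ∧ ndeg G y = 3 ∧
            A = {x, y} ∧ P = {(A, A), (A, B)})) ∧
        {v | (flips G P).neighborSet v = ∅}.ncard = 2 := by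
  intro G hG A B hdisj huniv hcardlt P hABP hPsub h2
  classical
  obtain ⟨s, rfl⟩ := (Set.toFinite A).exists_finset_coe
  have hBs : B = ↑(sᶜ) := by
    have h1 : B = (↑s : Set (Fin 5))ᶜ := by
      ext v
      constructor
      · intro hv hv'
        exact Set.disjoint_left.mp hdisj hv' hv
      · intro hv
        have hvm : v ∈ (↑s : Set (Fin 5)) ∪ B := huniv.symm ▸ Set.mem_univ v
        rcases hvm with h | h
        · exact absurd h hv
        · exact h
    rw [h1, Finset.coe_compl]
  subst hBs
  have hcards : 2 * s.card < 5 := by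
    rw [Set.ncard_coe_finset, Set.ncard_coe_finset, Finset.card_compl] at hcardlt
    simp only [Fintype.card_fin] at hcardlt
    omega
  have hABne : (↑s : Set (Fin 5)) ≠ ↑(sᶜ) := by
    intro h
    rw [h] at hcardlt
    exact lt_irrefl _ hcardlt
  simp only [Finset.coe_compl] at hABP hPsub hABne ⊢
  obtain ⟨b1, hb1⟩ : ∃ b : Bool, b = true ↔ ((↑s : Set (Fin 5)), (↑s : Set (Fin 5))) ∈ P :=
    ⟨decide (((↑s : Set (Fin 5)), (↑s : Set (Fin 5))) ∈ P), by simp⟩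
  obtain ⟨b2, hb2⟩ : ∃ b : Bool,
      b = true ↔ (((↑s : Set (Fin 5))ᶜ), ((↑s : Set (Fin 5))ᶜ)) ∈ P :=
    ⟨decide ((((↑s : Set (Fin 5))ᶜ), ((↑s : Set (Fin 5))ᶜ)) ∈ P), by simp⟩
  have hflip : flips G P = flipM G s b1 b2 := by
    ext u v
    rw [flips_adj_iff G hABne hPsub u v]
    show _ ↔ u ≠ v ∧ Xor' (Xor' (b1 = true ∧ u ∈ s ∧ v ∈ s)
      (Xor' (b2 = true ∧ u ∉ s ∧ v ∉ s) ((u ∈ s ∧ v ∉ s) ∨ (u ∉ s ∧ v ∈ s)))) (G.Adj u v)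
    simp only [hb1, hb2, hABP, true_and, Set.mem_compl_iff, Finset.mem_coe]
  simp only [Fobs, Set.mem_insert_iff, Set.mem_singleton_iff] at hG
  rcases hG with rfl | rfl | rfl | rfl
  · rw [hflip, iso_ncard] at h2
    exact absurd h2 (key s hcards b1 b2).1
  · rw [hflip, iso_ncard] at h2
    exact absurd h2 (key s hcards b1 b2).2.1
  · -- the gem
    rw [hflip, iso_ncard] at h2
    obtain ⟨hc, hcnt⟩ := (key s hcards b1 b2).2.2.2 h2
    refine ⟨rfl, ?_, by rw [hflip, iso_ncard]; exact hcnt⟩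
    rcases hc with ⟨hs, hb1f, hb2t⟩ | ⟨hs, hb1t, hb2f⟩
    · -- P = {(B,B),(A,B)}
      have hP1 : ((↑s : Set (Fin 5)), (↑s : Set (Fin 5))) ∉ P := by
        intro hmem
        have := hb1.mpr hmem
        rw [hb1f] at this
        exact Bool.false_ne_true this
      have hP2 : (((↑s : Set (Fin 5))ᶜ), ((↑s : Set (Fin 5))ᶜ)) ∈ P := hb2.mp (by rw [hb2t])
      have hPeq : P = {(((↑s : Set (Fin 5))ᶜ), ((↑s : Set (Fin 5))ᶜ)),
          ((↑s : Set (Fin 5)), ((↑s : Set (Fin 5))ᶜ))} := by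
        ext p
        constructor
        · intro hp
          have := hPsub hp
          simp only [Set.mem_insert_iff, Set.mem_singleton_iff] at this ⊢
          rcases this with rfl | rfl | rfl
          · exact absurd hp hP1
          · exact Or.inl rfl
          · exact Or.inr rfl
        · intro hp
          simp only [Set.mem_insert_iff, Set.mem_singleton_iff] at hp
          rcases hp with rfl | rfl
          · exact hP2
          · exact hABP
      left
      rcases hs with rfl | rfl
      · refine ⟨0, 2, ?_, ?_, by decide, by decide, by ext w; simp, hPeq⟩
        · rw [ndeg_eq_degree]; decide
        · rw [ndeg_eq_degree]; decide
      · refine ⟨3, 1, ?_, ?_, by decide, by decide, by ext w; simp [or_comm], hPeq⟩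
        · rw [ndeg_eq_degree]; decide
        · rw [ndeg_eq_degree]; decide
    · -- P = {(A,A),(A,B)}
      have hP1 : ((↑s : Set (Fin 5)), (↑s : Set (Fin 5))) ∈ P := hb1.mp (by rw [hb1t])
      have hP2 : (((↑s : Set (Fin 5))ᶜ), ((↑s : Set (Fin 5))ᶜ)) ∉ P := by
        intro hmem
        have := hb2.mpr hmem
        rw [hb2f] at this
        exact Bool.false_ne_true this
      have hPeq : P = {((↑s : Set (Fin 5)), (↑s : Set (Fin 5))),
          ((↑s : Set (Fin 5)), ((↑s : Set (Fin 5))ᶜ))} := by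
        ext p
        constructor
        · intro hp
          have := hPsub hp
          simp only [Set.mem_insert_iff, Set.mem_singleton_iff] at this ⊢
          rcases this with rfl | rfl | rfl
          · exact Or.inl rfl
          · exact absurd hp hP2
          · exact Or.inr rfl
        · intro hp
          simp only [Set.mem_insert_iff, Set.mem_singleton_iff] at hp
          rcases hp with rfl | rfl
          · exact hP1
          · exact hABP
      right
      rcases hs with rfl | rfl
      · refine ⟨4, 1, by decide, ?_, by ext w; simp [or_comm], hPeq⟩
        rw [ndeg_eq_degree]; decide
      · refine ⟨4, 2, by decide, ?_, by ext w; simp [or_comm], hPeq⟩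
        rw [ndeg_eq_degree]; decide
  · rw [hflip, iso_ncard] at h2
    exact absurd h2 (key s hcards b1 b2).2.2.1
end

section
/- Let G be a graph and let (A,B,C) be a triple of bi-joins of G (i.e., a partition of V(G) into three parts such that each of (A, B∪C), (B, A∪C), (C, A∪B) is a bi-join). Then there exist sets X, Y ⊆ V(G) and a collection S of pairs from {(X,X),(Y,Y),(X,Y)} such that in G ⊕ S there are no edges between any two distinct sets among A, B, and C. (In other words, G admits a 2-flip removing all edges between distinct parts of the triple.) -/
open SimpleGraph Set

open FlipWidth in
private lemma aux_not_flips_adj {V : Type*} (G : SimpleGraph V) (P : Set (Set V × Set V))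
    (u v : V) (h : Odd {p ∈ P | crossPair p u v}.ncard ↔ G.Adj u v) :
    ¬ (flips G P).Adj u v := by
  rintro ⟨_, hx⟩
  unfold Xor' Xor at hx
  tauto

set_option maxHeartbeats 1000000 in
open FlipWidth in
private lemma aux_flip {V : Type*} (G : SimpleGraph V) (A B C : Set V)
    (g : V → Prop) (E : Prop)
    (hg : ∀ u v : V, crossParts A B C u v → (G.Adj u v ↔ ((g u ↔ g v) ↔ E))) :
    ∃ X Y : Set V, ∃ P ⊆ ({(X, X), (Y, Y), (X, Y)} : Set (Set V × Set V)),
      ∀ u v : V, crossParts A B C u v → ¬ (flips G P).Adj u v := by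
  classical
  by_cases hE : E
  · refine ⟨{v | g v}, {v | ¬ g v},
      {({v | g v}, {v | g v}), ({v | ¬ g v}, {v | ¬ g v})}, ?_, ?_⟩
    · intro p hp
      simp only [Set.mem_insert_iff, Set.mem_singleton_iff] at hp ⊢
      tauto
    · intro u v hcross
      have hiff := hg u v hcross
      apply aux_not_flips_adj
      by_cases hgu : g u <;> by_cases hgv : g v
      · have hset : {p ∈ ({({v | g v}, {v | g v}), ({v | ¬ g v}, {v | ¬ g v})} :
            Set (Set V × Set V)) | crossPair p u v} = {({v | g v}, {v | g v})} := by
          ext p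
          simp only [Set.mem_sep_iff, Set.mem_insert_iff, Set.mem_singleton_iff]
          constructor
          · rintro ⟨rfl | rfl, hcp⟩
            · rfl
            · simp only [crossPair, Set.mem_setOf_eq] at hcp; tauto
          · rintro rfl
            exact ⟨Or.inl rfl, Or.inl ⟨hgu, hgv⟩⟩
        rw [hset, Set.ncard_singleton]
        simp only [odd_one, true_iff]
        tauto
      · have hset : {p ∈ ({({v | g v}, {v | g v}), ({v | ¬ g v}, {v | ¬ g v})} :
            Set (Set V × Set V)) | crossPair p u v} = ∅ := by
          ext p
          simp only [Set.mem_sep_iff, Set.mem_insert_iff, Set.mem_singleton_iff,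
            Set.mem_empty_iff_false, iff_false]
          rintro ⟨rfl | rfl, hcp⟩ <;>
            (simp only [crossPair, Set.mem_setOf_eq] at hcp; tauto)
        rw [hset, Set.ncard_empty]
        simp only [Nat.odd_iff, Nat.zero_mod, false_iff]
        tauto
      · have hset : {p ∈ ({({v | g v}, {v | g v}), ({v | ¬ g v}, {v | ¬ g v})} :
            Set (Set V × Set V)) | crossPair p u v} = ∅ := by
          ext p
          simp only [Set.mem_sep_iff, Set.mem_insert_iff, Set.mem_singleton_iff,
            Set.mem_empty_iff_false, iff_false]
          rintro ⟨rfl | rfl, hcp⟩ <;>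
            (simp only [crossPair, Set.mem_setOf_eq] at hcp; tauto)
        rw [hset, Set.ncard_empty]
        simp only [Nat.odd_iff, Nat.zero_mod, false_iff]
        tauto
      · have hset : {p ∈ ({({v | g v}, {v | g v}), ({v | ¬ g v}, {v | ¬ g v})} :
            Set (Set V × Set V)) | crossPair p u v} = {({v | ¬ g v}, {v | ¬ g v})} := by
          ext p
          simp only [Set.mem_sep_iff, Set.mem_insert_iff, Set.mem_singleton_iff]
          constructor
          · rintro ⟨rfl | rfl, hcp⟩
            · simp only [crossPair, Set.mem_setOf_eq] at hcp; tauto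
            · rfl
          · rintro rfl
            exact ⟨Or.inr rfl, Or.inl ⟨hgu, hgv⟩⟩
        rw [hset, Set.ncard_singleton]
        simp only [odd_one, true_iff]
        tauto
  · refine ⟨{v | g v}, {v | ¬ g v}, {({v | g v}, {v | ¬ g v})}, ?_, ?_⟩
    · intro p hp
      simp only [Set.mem_insert_iff, Set.mem_singleton_iff] at hp ⊢
      tauto
    · intro u v hcross
      have hiff := hg u v hcross
      apply aux_not_flips_adj
      by_cases hgu : g u <;> by_cases hgv : g v
      all_goals (
        first
        | (have hset : {p ∈ ({({v | g v}, {v | ¬ g v})} : Set (Set V × Set V)) |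
              crossPair p u v} = ∅ := by
            ext p
            simp only [Set.mem_sep_iff, Set.mem_singleton_iff, Set.mem_empty_iff_false,
              iff_false]
            rintro ⟨rfl, hcp⟩
            simp only [crossPair, Set.mem_setOf_eq] at hcp; tauto
           rw [hset, Set.ncard_empty]
           simp only [Nat.odd_iff, Nat.zero_mod, false_iff]
           tauto)
        | (have hset : {p ∈ ({({v | g v}, {v | ¬ g v})} : Set (Set V × Set V)) |
              crossPair p u v} = {({v | g v}, {v | ¬ g v})} := by
            ext p
            simp only [Set.mem_sep_iff, Set.mem_singleton_iff]
            constructor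
            · rintro ⟨rfl, _⟩; rfl
            · rintro rfl
              refine ⟨rfl, ?_⟩
              simp only [crossPair, Set.mem_setOf_eq]
              tauto
           rw [hset, Set.ncard_singleton]
           simp only [odd_one, true_iff]
           tauto))


open FlipWidth in
private lemma aux_key {V : Type*} (G : SimpleGraph V) {V1 V2 W1 W2 : Set V}
    (hW1 : W1 ⊆ V1) (hW2 : W2 ⊆ V2)
    (c1 : Complete G W1 W2) (a1 : Anticomplete G W1 (V2 \ W2))
    (c2 : Complete G (V1 \ W1) (V2 \ W2)) (a2 : Anticomplete G (V1 \ W1) W2) :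
    ∀ a ∈ V1, ∀ x ∈ V2, (G.Adj a x ↔ ((a ∈ W1) ↔ (x ∈ W2))) := by
  intro a ha x hx
  by_cases k1 : a ∈ W1 <;> by_cases k2 : x ∈ W2
  · have := c1 a k1 x k2; tauto
  · have := a1 a k1 x ⟨hx, k2⟩; tauto
  · have := a2 a ⟨ha, k1⟩ x k2; tauto
  · have := c2 a ⟨ha, k1⟩ x ⟨hx, k2⟩; tauto

set_option maxHeartbeats 1000000 in
private lemma aux_skelS (adj adj' wa sa wb sb : Prop)
    (e1 : adj ↔ (wa ↔ sa)) (e2 : adj' ↔ (wb ↔ sb)) (hc : adj ↔ adj') :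
    sa ↔ (wb ↔ (wa ↔ sb)) := by tauto

set_option maxHeartbeats 1000000 in
private lemma aux_skelAB (adj xa xb sa k1 k2 k3 : Prop)
    (e1 : adj ↔ (xa ↔ sa)) (e2 : sa ↔ (xb ↔ k1)) :
    adj ↔ ((xa ↔ (xb ↔ (k2 ↔ k3))) ↔ (k1 ↔ (k2 ↔ k3))) := by tauto

set_option maxHeartbeats 1000000 in
private lemma aux_skelAC (adj xa xc sa k1 k2 k3 : Prop)
    (e1 : adj ↔ (xa ↔ sa)) (e2 : sa ↔ (xc ↔ k2)) :
    adj ↔ ((xa ↔ (xc ↔ (k1 ↔ k3))) ↔ (k1 ↔ (k2 ↔ k3))) := by tauto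

set_option maxHeartbeats 1000000 in
private lemma aux_skelBC (adj xb xc sb k1 k2 k3 : Prop)
    (e1 : adj ↔ (xb ↔ sb)) (e2 : sb ↔ (xc ↔ k3)) :
    adj ↔ (((xb ↔ (k2 ↔ k3)) ↔ (xc ↔ (k1 ↔ k3))) ↔ (k1 ↔ (k2 ↔ k3))) := by tauto

private def auxg {V : Type*} (A B C WA WB WC : Set V) (k1 k2 k3 : Prop) : V → Prop :=
  fun v => (v ∈ A ∧ v ∈ WA) ∨ (v ∈ B ∧ ((v ∈ WB) ↔ (k2 ↔ k3))) ∨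
    (v ∈ C ∧ ((v ∈ WC) ↔ (k1 ↔ k3)))

private lemma auxg_A {V : Type*} {A B C WA WB WC : Set V} {k1 k2 k3 : Prop} {v : V}
    (hv : v ∈ A) (n1 : v ∉ B) (n2 : v ∉ C) :
    auxg A B C WA WB WC k1 k2 k3 v ↔ (v ∈ WA) := by
  unfold auxg
  constructor
  · rintro (⟨_, h⟩ | ⟨h, _⟩ | ⟨h, _⟩)
    exacts [h, absurd h n1, absurd h n2]
  · intro h; exact Or.inl ⟨hv, h⟩

private lemma auxg_B {V : Type*} {A B C WA WB WC : Set V} {k1 k2 k3 : Prop} {v : V}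
    (hv : v ∈ B) (n1 : v ∉ A) (n2 : v ∉ C) :
    auxg A B C WA WB WC k1 k2 k3 v ↔ ((v ∈ WB) ↔ (k2 ↔ k3)) := by
  unfold auxg
  constructor
  · rintro (⟨h, _⟩ | ⟨_, h⟩ | ⟨h, _⟩)
    exacts [absurd h n1, h, absurd h n2]
  · intro h; exact Or.inr (Or.inl ⟨hv, h⟩)

private lemma auxg_C {V : Type*} {A B C WA WB WC : Set V} {k1 k2 k3 : Prop} {v : V}
    (hv : v ∈ C) (n1 : v ∉ A) (n2 : v ∉ B) :
    auxg A B C WA WB WC k1 k2 k3 v ↔ ((v ∈ WC) ↔ (k1 ↔ k3)) := by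
  unfold auxg
  constructor
  · rintro (⟨h, _⟩ | ⟨h, _⟩ | ⟨_, h⟩)
    exacts [absurd h n1, absurd h n2, h]
  · intro h; exact Or.inr (Or.inr ⟨hv, h⟩)

set_option maxHeartbeats 1000000 in
open FlipWidth in
/-- For a triple of bi-joins `(A, B, C)` of `G`, there is a `2`-flip of `G`
with no edges incident to two distinct sets among `A`, `B`, `C`. -/
theorem triple_of_bijoins_two_flip {V : Type*} (G : SimpleGraph V)
    (A B C : Set V) (hA : A.Nonempty) (hB : B.Nonempty) (hC : C.Nonempty)
    (hAB : Disjoint A B) (hAC : Disjoint A C) (hBC : Disjoint B C)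
    (hunion : A ∪ B ∪ C = Set.univ)
    (h1 : IsBiJoin G A (B ∪ C)) (h2 : IsBiJoin G B (A ∪ C))
    (h3 : IsBiJoin G C (A ∪ B)) :
    ∃ X Y : Set V, ∃ P ⊆ ({(X, X), (Y, Y), (X, Y)} : Set (Set V × Set V)),
      ∀ u v : V, crossParts A B C u v → ¬ (flips G P).Adj u v := by
  classical
  obtain ⟨a0, ha0⟩ := hA
  obtain ⟨b0, hb0⟩ := hB
  obtain ⟨WA, SA, hWAs, hSAs, c1A, a1A, c2A, a2A⟩ := h1
  obtain ⟨WB, SB, hWBs, hSBs, c1B, a1B, c2B, a2B⟩ := h2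
  obtain ⟨WC, SC, hWCs, hSCs, c1C, a1C, c2C, a2C⟩ := h3
  have keyA := aux_key G hWAs hSAs c1A a1A c2A a2A
  have keyB := aux_key G hWBs hSBs c1B a1B c2B a2B
  have keyC := aux_key G hWCs hSCs c1C a1C c2C a2C
  have hSA_B : ∀ v ∈ B, ((v ∈ SA) ↔ ((v ∈ WB) ↔ ((a0 ∈ WA) ↔ (a0 ∈ SB)))) :=
    fun v hv => aux_skelS _ _ _ _ _ _ (keyA a0 ha0 v (Or.inl hv))
      (keyB v hv a0 (Or.inl ha0)) (G.adj_comm a0 v)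
  have hSA_C : ∀ v ∈ C, ((v ∈ SA) ↔ ((v ∈ WC) ↔ ((a0 ∈ WA) ↔ (a0 ∈ SC)))) :=
    fun v hv => aux_skelS _ _ _ _ _ _ (keyA a0 ha0 v (Or.inr hv))
      (keyC v hv a0 (Or.inl ha0)) (G.adj_comm a0 v)
  have hSB_C : ∀ v ∈ C, ((v ∈ SB) ↔ ((v ∈ WC) ↔ ((b0 ∈ WB) ↔ (b0 ∈ SC)))) :=
    fun v hv => aux_skelS _ _ _ _ _ _ (keyB b0 hb0 v (Or.inr hv))
      (keyC v hv b0 (Or.inr hb0)) (G.adj_comm b0 v)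
  refine aux_flip G A B C
    (auxg A B C WA WB WC ((a0 ∈ WA) ↔ (a0 ∈ SB)) ((a0 ∈ WA) ↔ (a0 ∈ SC))
      ((b0 ∈ WB) ↔ (b0 ∈ SC)))
    (((a0 ∈ WA) ↔ (a0 ∈ SB)) ↔ (((a0 ∈ WA) ↔ (a0 ∈ SC)) ↔ ((b0 ∈ WB) ↔ (b0 ∈ SC))))
    ?_
  intro u v hcross
  rcases hcross with ⟨hu, hv⟩ | ⟨hu, hv⟩ | ⟨hu, hv⟩ | ⟨hu, hv⟩ | ⟨hu, hv⟩ | ⟨hu, hv⟩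
  · -- u ∈ A, v ∈ B
    have hgu := auxg_A (WA := WA) (WB := WB) (WC := WC)
      (k1 := ((a0 ∈ WA) ↔ (a0 ∈ SB))) (k2 := ((a0 ∈ WA) ↔ (a0 ∈ SC))) (k3 := ((b0 ∈ WB) ↔ (b0 ∈ SC)))
      hu (Set.disjoint_left.mp hAB hu) (Set.disjoint_left.mp hAC hu)
    have hgv := auxg_B (WA := WA) (WB := WB) (WC := WC)
      (k1 := ((a0 ∈ WA) ↔ (a0 ∈ SB))) (k2 := ((a0 ∈ WA) ↔ (a0 ∈ SC))) (k3 := ((b0 ∈ WB) ↔ (b0 ∈ SC)))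
      hv (Set.disjoint_right.mp hAB hv) (Set.disjoint_left.mp hBC hv)
    exact (aux_skelAB _ _ _ _ _ _ _ (keyA u hu v (Or.inl hv)) (hSA_B v hv)).trans
      (iff_congr (iff_congr hgu hgv) Iff.rfl).symm
  · -- u ∈ B, v ∈ A
    have hgu := auxg_B (WA := WA) (WB := WB) (WC := WC)
      (k1 := ((a0 ∈ WA) ↔ (a0 ∈ SB))) (k2 := ((a0 ∈ WA) ↔ (a0 ∈ SC))) (k3 := ((b0 ∈ WB) ↔ (b0 ∈ SC)))
      hu (Set.disjoint_right.mp hAB hu) (Set.disjoint_left.mp hBC hu)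
    have hgv := auxg_A (WA := WA) (WB := WB) (WC := WC)
      (k1 := ((a0 ∈ WA) ↔ (a0 ∈ SB))) (k2 := ((a0 ∈ WA) ↔ (a0 ∈ SC))) (k3 := ((b0 ∈ WB) ↔ (b0 ∈ SC)))
      hv (Set.disjoint_left.mp hAB hv) (Set.disjoint_left.mp hAC hv)
    exact (G.adj_comm u v).trans
      ((aux_skelAB _ _ _ _ _ _ _ (keyA v hv u (Or.inl hu)) (hSA_B u hu)).trans
        (iff_congr ((iff_congr hgu hgv).trans Iff.comm) Iff.rfl).symm)
  · -- u ∈ A, v ∈ C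
    have hgu := auxg_A (WA := WA) (WB := WB) (WC := WC)
      (k1 := ((a0 ∈ WA) ↔ (a0 ∈ SB))) (k2 := ((a0 ∈ WA) ↔ (a0 ∈ SC))) (k3 := ((b0 ∈ WB) ↔ (b0 ∈ SC)))
      hu (Set.disjoint_left.mp hAB hu) (Set.disjoint_left.mp hAC hu)
    have hgv := auxg_C (WA := WA) (WB := WB) (WC := WC)
      (k1 := ((a0 ∈ WA) ↔ (a0 ∈ SB))) (k2 := ((a0 ∈ WA) ↔ (a0 ∈ SC))) (k3 := ((b0 ∈ WB) ↔ (b0 ∈ SC)))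
      hv (Set.disjoint_right.mp hAC hv) (Set.disjoint_right.mp hBC hv)
    exact (aux_skelAC _ _ _ _ _ _ _ (keyA u hu v (Or.inr hv)) (hSA_C v hv)).trans
      (iff_congr (iff_congr hgu hgv) Iff.rfl).symm
  · -- u ∈ C, v ∈ A
    have hgu := auxg_C (WA := WA) (WB := WB) (WC := WC)
      (k1 := ((a0 ∈ WA) ↔ (a0 ∈ SB))) (k2 := ((a0 ∈ WA) ↔ (a0 ∈ SC))) (k3 := ((b0 ∈ WB) ↔ (b0 ∈ SC)))
      hu (Set.disjoint_right.mp hAC hu) (Set.disjoint_right.mp hBC hu)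
    have hgv := auxg_A (WA := WA) (WB := WB) (WC := WC)
      (k1 := ((a0 ∈ WA) ↔ (a0 ∈ SB))) (k2 := ((a0 ∈ WA) ↔ (a0 ∈ SC))) (k3 := ((b0 ∈ WB) ↔ (b0 ∈ SC)))
      hv (Set.disjoint_left.mp hAB hv) (Set.disjoint_left.mp hAC hv)
    exact (G.adj_comm u v).trans
      ((aux_skelAC _ _ _ _ _ _ _ (keyA v hv u (Or.inr hu)) (hSA_C u hu)).trans
        (iff_congr ((iff_congr hgu hgv).trans Iff.comm) Iff.rfl).symm)
  · -- u ∈ B, v ∈ C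
    have hgu := auxg_B (WA := WA) (WB := WB) (WC := WC)
      (k1 := ((a0 ∈ WA) ↔ (a0 ∈ SB))) (k2 := ((a0 ∈ WA) ↔ (a0 ∈ SC))) (k3 := ((b0 ∈ WB) ↔ (b0 ∈ SC)))
      hu (Set.disjoint_right.mp hAB hu) (Set.disjoint_left.mp hBC hu)
    have hgv := auxg_C (WA := WA) (WB := WB) (WC := WC)
      (k1 := ((a0 ∈ WA) ↔ (a0 ∈ SB))) (k2 := ((a0 ∈ WA) ↔ (a0 ∈ SC))) (k3 := ((b0 ∈ WB) ↔ (b0 ∈ SC)))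
      hv (Set.disjoint_right.mp hAC hv) (Set.disjoint_right.mp hBC hv)
    exact (aux_skelBC _ _ _ _ _ _ _ (keyB u hu v (Or.inr hv)) (hSB_C v hv)).trans
      (iff_congr (iff_congr hgu hgv) Iff.rfl).symm
  · -- u ∈ C, v ∈ B
    have hgu := auxg_C (WA := WA) (WB := WB) (WC := WC)
      (k1 := ((a0 ∈ WA) ↔ (a0 ∈ SB))) (k2 := ((a0 ∈ WA) ↔ (a0 ∈ SC))) (k3 := ((b0 ∈ WB) ↔ (b0 ∈ SC)))
      hu (Set.disjoint_right.mp hAC hu) (Set.disjoint_right.mp hBC hu)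
    have hgv := auxg_B (WA := WA) (WB := WB) (WC := WC)
      (k1 := ((a0 ∈ WA) ↔ (a0 ∈ SB))) (k2 := ((a0 ∈ WA) ↔ (a0 ∈ SC))) (k3 := ((b0 ∈ WB) ↔ (b0 ∈ SC)))
      hv (Set.disjoint_right.mp hAB hv) (Set.disjoint_left.mp hBC hv)
    exact (G.adj_comm u v).trans
      ((aux_skelBC _ _ _ _ _ _ _ (keyB v hv u (Or.inr hu)) (hSB_C u hu)).trans
        (iff_congr ((iff_congr hgu hgv).trans Iff.comm) Iff.rfl).symm)
end

section
/- Let G be a graph with a triple of bi-joins (A,B,C) with bi-join partitions (A1, A2, B1, B2) of (A,B), (A1, A2, C1, C2) of (A,C), and (B1, B2, C2, C1) of (B,C). Then setting X = A1 ∪ B2 ∪ C2 and Y = A2 ∪ B1 ∪ C1, the graph G ⊕ (X,Y) has no edges between distinct sets among A, B, C. -/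
open SimpleGraph Set

open FlipWidth in
/-- Case 2 of Lemma 4.1: if `(A,B,C)` is a triple of bi-joins with bi-join
partitions `(A1,A2,B1,B2)` of `(A,B)`, `(A1,A2,C1,C2)` of `(A,C)` and
`(B1,B2,C2,C1)` of `(B,C)`, then flipping `(X,Y)` for `X = A1 ∪ B2 ∪ C2`,
`Y = A2 ∪ B1 ∪ C1` removes all cross edges. -/
theorem triple_of_bijoins_case2 {V : Type*} (G : SimpleGraph V)
    (A B C A1 A2 B1 B2 C1 C2 : Set V)
    (hA : A.Nonempty) (hB : B.Nonempty) (hC : C.Nonempty)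
    (hAB : Disjoint A B) (hAC : Disjoint A C) (hBC : Disjoint B C)
    (hunion : A ∪ B ∪ C = Set.univ)
    (hA12 : A1 ∪ A2 = A) (hA12d : Disjoint A1 A2)
    (hB12 : B1 ∪ B2 = B) (hB12d : Disjoint B1 B2)
    (hC12 : C1 ∪ C2 = C) (hC12d : Disjoint C1 C2)
    (hab1 : Complete G A1 B1) (hab2 : Anticomplete G A1 B2)
    (hab3 : Complete G A2 B2) (hab4 : Anticomplete G A2 B1)
    (hac1 : Complete G A1 C1) (hac2 : Anticomplete G A1 C2)
    (hac3 : Complete G A2 C2) (hac4 : Anticomplete G A2 C1)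
    (hbc1 : Complete G B1 C2) (hbc2 : Anticomplete G B1 C1)
    (hbc3 : Complete G B2 C1) (hbc4 : Anticomplete G B2 C2) :
    ∀ u v : V, crossParts A B C u v →
      ¬ (flip G (A1 ∪ B2 ∪ C2) (A2 ∪ B1 ∪ C1)).Adj u v := by
  intro u v hcross hadj
  obtain ⟨hne, hx⟩ := hadj
  have sA1 : A1 ⊆ A := by rw [← hA12]; exact Set.subset_union_left
  have sA2 : A2 ⊆ A := by rw [← hA12]; exact Set.subset_union_right
  have sB1 : B1 ⊆ B := by rw [← hB12]; exact Set.subset_union_left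
  have sB2 : B2 ⊆ B := by rw [← hB12]; exact Set.subset_union_right
  have sC1 : C1 ⊆ C := by rw [← hC12]; exact Set.subset_union_left
  have sC2 : C2 ⊆ C := by rw [← hC12]; exact Set.subset_union_right
  have nY : ∀ w : V, w ∈ A1 ∪ B2 ∪ C2 → w ∉ A2 ∪ B1 ∪ C1 := by
    intro w hw hw'
    simp only [Set.mem_union] at hw hw'
    rcases hw with (h | h) | h <;> rcases hw' with (h' | h') | h'
    exacts [Set.disjoint_left.mp hA12d h h',
      Set.disjoint_left.mp hAB (sA1 h) (sB1 h'),
      Set.disjoint_left.mp hAC (sA1 h) (sC1 h'),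
      Set.disjoint_left.mp hAB.symm (sB2 h) (sA2 h'),
      Set.disjoint_left.mp hB12d.symm h h',
      Set.disjoint_left.mp hBC (sB2 h) (sC1 h'),
      Set.disjoint_left.mp hAC.symm (sC2 h) (sA2 h'),
      Set.disjoint_left.mp hBC.symm (sC2 h) (sB1 h'),
      Set.disjoint_left.mp hC12d.symm h h']
  have done1 : ∀ x y : V,
      ((x ∈ A1 ∪ B2 ∪ C2 ∧ y ∈ A2 ∪ B1 ∪ C1) ∨ (x ∈ A2 ∪ B1 ∪ C1 ∧ y ∈ A1 ∪ B2 ∪ C2)) →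
      G.Adj x y →
      ¬ Xor' ((x ∈ A1 ∪ B2 ∪ C2 ∧ y ∈ A2 ∪ B1 ∪ C1) ∨
        (x ∈ A2 ∪ B1 ∪ C1 ∧ y ∈ A1 ∪ B2 ∪ C2)) (G.Adj x y) := by
    intro x y hc ha h
    rcases h with ⟨_, h⟩ | ⟨_, h⟩
    · exact h ha
    · exact h hc
  have done2 : ∀ x y : V,
      ((x ∈ A1 ∪ B2 ∪ C2 ∧ y ∈ A1 ∪ B2 ∪ C2) ∨ (x ∈ A2 ∪ B1 ∪ C1 ∧ y ∈ A2 ∪ B1 ∪ C1)) →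
      ¬ G.Adj x y →
      ¬ Xor' ((x ∈ A1 ∪ B2 ∪ C2 ∧ y ∈ A2 ∪ B1 ∪ C1) ∨
        (x ∈ A2 ∪ B1 ∪ C1 ∧ y ∈ A1 ∪ B2 ∪ C2)) (G.Adj x y) := by
    intro x y hc ha h
    rcases h with ⟨h, _⟩ | ⟨h, _⟩
    · rcases hc with ⟨h1, h2⟩ | ⟨h1, h2⟩ <;> rcases h with ⟨c1, c2⟩ | ⟨c1, c2⟩
      · exact nY y h2 c2
      · exact nY x h1 c1
      · exact nY x c1 h1
      · exact nY y c2 h2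
    · exact ha h
  rcases hcross with ⟨hu, hv⟩ | ⟨hu, hv⟩ | ⟨hu, hv⟩ | ⟨hu, hv⟩ | ⟨hu, hv⟩ | ⟨hu, hv⟩
  · -- u ∈ A, v ∈ B
    rw [← hA12] at hu; rw [← hB12] at hv
    rcases hu with hu | hu <;> rcases hv with hv | hv
    · exact done1 u v (Or.inl ⟨by simp [hu], by simp [hv]⟩) (hab1 u hu v hv) hx
    · exact done2 u v (Or.inl ⟨by simp [hu], by simp [hv]⟩) (hab2 u hu v hv) hx
    · exact done2 u v (Or.inr ⟨by simp [hu], by simp [hv]⟩) (hab4 u hu v hv) hx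
    · exact done1 u v (Or.inr ⟨by simp [hu], by simp [hv]⟩) (hab3 u hu v hv) hx
  · -- u ∈ B, v ∈ A
    rw [← hB12] at hu; rw [← hA12] at hv
    rcases hu with hu | hu <;> rcases hv with hv | hv
    · exact done1 u v (Or.inr ⟨by simp [hu], by simp [hv]⟩) ((hab1 v hv u hu).symm) hx
    · exact done2 u v (Or.inr ⟨by simp [hu], by simp [hv]⟩) (fun h => hab4 v hv u hu h.symm) hx
    · exact done2 u v (Or.inl ⟨by simp [hu], by simp [hv]⟩) (fun h => hab2 v hv u hu h.symm) hx
    · exact done1 u v (Or.inl ⟨by simp [hu], by simp [hv]⟩) ((hab3 v hv u hu).symm) hx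
  · -- u ∈ A, v ∈ C
    rw [← hA12] at hu; rw [← hC12] at hv
    rcases hu with hu | hu <;> rcases hv with hv | hv
    · exact done1 u v (Or.inl ⟨by simp [hu], by simp [hv]⟩) (hac1 u hu v hv) hx
    · exact done2 u v (Or.inl ⟨by simp [hu], by simp [hv]⟩) (hac2 u hu v hv) hx
    · exact done2 u v (Or.inr ⟨by simp [hu], by simp [hv]⟩) (hac4 u hu v hv) hx
    · exact done1 u v (Or.inr ⟨by simp [hu], by simp [hv]⟩) (hac3 u hu v hv) hx
  · -- u ∈ C, v ∈ A
    rw [← hC12] at hu; rw [← hA12] at hv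
    rcases hu with hu | hu <;> rcases hv with hv | hv
    · exact done1 u v (Or.inr ⟨by simp [hu], by simp [hv]⟩) ((hac1 v hv u hu).symm) hx
    · exact done2 u v (Or.inr ⟨by simp [hu], by simp [hv]⟩) (fun h => hac4 v hv u hu h.symm) hx
    · exact done2 u v (Or.inl ⟨by simp [hu], by simp [hv]⟩) (fun h => hac2 v hv u hu h.symm) hx
    · exact done1 u v (Or.inl ⟨by simp [hu], by simp [hv]⟩) ((hac3 v hv u hu).symm) hx
  · -- u ∈ B, v ∈ C
    rw [← hB12] at hu; rw [← hC12] at hv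
    rcases hu with hu | hu <;> rcases hv with hv | hv
    · exact done2 u v (Or.inr ⟨by simp [hu], by simp [hv]⟩) (hbc2 u hu v hv) hx
    · exact done1 u v (Or.inr ⟨by simp [hu], by simp [hv]⟩) (hbc1 u hu v hv) hx
    · exact done1 u v (Or.inl ⟨by simp [hu], by simp [hv]⟩) (hbc3 u hu v hv) hx
    · exact done2 u v (Or.inl ⟨by simp [hu], by simp [hv]⟩) (hbc4 u hu v hv) hx
  · -- u ∈ C, v ∈ B
    rw [← hC12] at hu; rw [← hB12] at hv
    rcases hu with hu | hu <;> rcases hv with hv | hv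
    · exact done2 u v (Or.inr ⟨by simp [hu], by simp [hv]⟩) (fun h => hbc2 v hv u hu h.symm) hx
    · exact done1 u v (Or.inr ⟨by simp [hu], by simp [hv]⟩) ((hbc3 v hv u hu).symm) hx
    · exact done1 u v (Or.inl ⟨by simp [hu], by simp [hv]⟩) ((hbc1 v hv u hu).symm) hx
    · exact done2 u v (Or.inl ⟨by simp [hu], by simp [hv]⟩) (fun h => hbc4 v hv u hu h.symm) hx
end
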